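/- Let V be an infinite vector space over a field F, X an infinite subset of V, and φ = ∑_{i=1}^h cᵢxᵢ a linear form with nonzero coefficients in F. The following are equivalent: (i) X contains an infinite φ-Sidon set; (ii) X contains a φ-Sidon set of cardinality at least 2; (iii) φ has property N. -/
import Mathlib


open Finset

variable {F : Type*} [Field F] {V : Type*} [AddCommGroup V] [Module F V]

/-- The linear form with coefficients `c` has property N: there do not exist disjoint
subsets `I₁`, `I₂` of `{1,…,h}`, not both empty, with equal coefficient subset sums. -/
def PropN {h : ℕ} (c : Fin h → F) : Prop :=
  ¬ ∃ I₁ I₂ : Finset (Fin h), Disjoint I₁ I₂ ∧ ¬(I₁ = ∅ ∧ I₂ = ∅) ∧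
      ∑ i ∈ I₁, c i = ∑ i ∈ I₂, c i

/-- `A` is a Sidon set for the linear form `φ = ∑ cᵢ xᵢ`. -/
def IsSidonSet {h : ℕ} (c : Fin h → F) (A : Set V) : Prop :=
  A.Nonempty ∧ ∀ a a' : Fin h → V, (∀ i, a i ∈ A) → (∀ i, a' i ∈ A) →
    ∑ i, c i • a i = ∑ i, c i • a' i → a = a'

/-- `Φ_J(A,b) = φ_J(A) + (∑_{j ∈ Jᶜ} c_j) • b`. -/
def PhiJ {h : ℕ} (c : Fin h → F) (J : Finset (Fin h)) (A : Set V) (b : V) : Set V :=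
  {w | ∃ f : Fin h → V, (∀ j ∈ J, f j ∈ A) ∧
    w = (∑ j ∈ J, c j • f j) + (∑ j ∈ Jᶜ, c j) • b}

lemma sum_smul_split {h : ℕ} (c : Fin h → F) (a : Fin h → V) (T : Finset (Fin h)) (b : V)
    (hb : ∀ i ∈ T, a i = b) :
    ∑ i, c i • a i = (∑ i ∈ T, c i) • b + ∑ i ∈ Tᶜ, c i • a i := by
  rw [← Finset.sum_add_sum_compl T (fun i => c i • a i), Finset.sum_smul]
  congr 1
  exact Finset.sum_congr rfl fun i hi => by rw [hb i hi]

lemma propN_of_nontrivial {h : ℕ} {c : Fin h → F} {A : Set V}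
    (hnt : A.Nontrivial) (hSid : IsSidonSet c A) : PropN c := by
  rintro ⟨I₁, I₂, hdisj, hne, hsum⟩
  obtain ⟨x, hx, y, hy, hxy⟩ := hnt
  have key : ∀ (I : Finset (Fin h)), ∑ i, c i • (fun i => if i ∈ I then x else y) i
      = (∑ i ∈ I, c i) • x + (∑ i ∈ Iᶜ, c i) • y := by
    intro I
    rw [← Finset.sum_add_sum_compl I, Finset.sum_smul, Finset.sum_smul]
    congr 1
    · exact Finset.sum_congr rfl fun i hi => by simp [hi]
    · refine Finset.sum_congr rfl fun i hi => ?_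
      rw [Finset.mem_compl] at hi; simp [hi]
  have hcomp : ∑ i ∈ I₁ᶜ, c i = ∑ i ∈ I₂ᶜ, c i := by
    have h1 := Finset.sum_add_sum_compl I₁ c
    have h2 := Finset.sum_add_sum_compl I₂ c
    rw [← h2, hsum] at h1
    exact add_left_cancel h1
  have heq : (fun i => if i ∈ I₁ then x else y) = (fun i => if i ∈ I₂ then x else y) := by
    refine hSid.2 _ _ (fun i => ?_) (fun i => ?_) ?_
    · by_cases hi : i ∈ I₁ <;> simp [hi, hx, hy]
    · by_cases hi : i ∈ I₂ <;> simp [hi, hx, hy]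
    · rw [key I₁, key I₂, hsum, hcomp]
  rcases Finset.eq_empty_or_nonempty I₁ with h1 | ⟨i, hi⟩
  · rcases Finset.eq_empty_or_nonempty I₂ with h2 | ⟨i, hi⟩
    · exact hne ⟨h1, h2⟩
    · have hni : i ∉ I₁ := fun hi' => (Finset.disjoint_left.mp hdisj hi') hi
      have := congrFun heq i
      simp only [if_pos hi, if_neg hni] at this
      exact hxy this.symm
  · have hni : i ∉ I₂ := Finset.disjoint_left.mp hdisj hi
    have := congrFun heq i
    simp only [if_pos hi, if_neg hni] at this
    exact hxy this

lemma extend_sidon {h : ℕ} {c : Fin h → F} (hN : PropN c) (A : Finset V)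
    (hA : A.Nonempty) (hSid : IsSidonSet c (A : Set V)) {X : Set V} (hX : X.Infinite) :
    ∃ b ∈ X, b ∉ A ∧ IsSidonSet c (insert b (A : Set V)) := by
  classical
  obtain ⟨a₀, ha₀⟩ := hA
  set Bf : Finset (Fin h) × Finset (Fin h) × (Fin h → ↥A) × (Fin h → ↥A) → V :=
    fun p => (∑ i ∈ p.1, c i - ∑ i ∈ p.2.1, c i)⁻¹ •
      ((∑ i ∈ p.2.1ᶜ, c i • (p.2.2.2 i : V)) - ∑ i ∈ p.1ᶜ, c i • (p.2.2.1 i : V)) with hBf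
  have hBfin : (Set.range Bf).Finite := Set.finite_range _
  have hinf : (X \ (↑A ∪ Set.range Bf)).Infinite := hX.diff ((A.finite_toSet).union hBfin)
  obtain ⟨b, hb⟩ := hinf.nonempty
  rw [Set.mem_diff, Set.mem_union] at hb
  have hbX : b ∈ X := hb.1
  have hbA : b ∉ (A : Set V) := fun hh => hb.2 (Or.inl hh)
  have hbB : b ∉ Set.range Bf := fun hh => hb.2 (Or.inr hh)
  refine ⟨b, hbX, hbA, ⟨b, Set.mem_insert _ _⟩, ?_⟩
  intro a a' haA ha'A hsum
  set T : Finset (Fin h) := Finset.univ.filter (fun i => a i = b) with hT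
  set T' : Finset (Fin h) := Finset.univ.filter (fun i => a' i = b) with hT'
  have hmemT : ∀ i, i ∈ T ↔ a i = b := fun i => by simp [hT]
  have hmemT' : ∀ i, i ∈ T' ↔ a' i = b := fun i => by simp [hT']
  have hvalT : ∀ i, i ∉ T → a i ∈ A := by
    intro i hi
    rcases Set.mem_insert_iff.mp (haA i) with hh | hh
    · exact absurd ((hmemT i).mpr hh) hi
    · exact hh
  have hvalT' : ∀ i, i ∉ T' → a' i ∈ A := by
    intro i hi
    rcases Set.mem_insert_iff.mp (ha'A i) with hh | hh
    · exact absurd ((hmemT' i).mpr hh) hi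
    · exact hh
  have hsplit : (∑ i ∈ T, c i) • b + ∑ i ∈ Tᶜ, c i • a i
      = (∑ i ∈ T', c i) • b + ∑ i ∈ T'ᶜ, c i • a' i := by
    rw [← sum_smul_split c a T b (fun i hi => (hmemT i).mp hi),
        ← sum_smul_split c a' T' b (fun i hi => (hmemT' i).mp hi)]
    exact hsum
  by_cases hTT : T = T'
  · have hsum2 : ∑ i ∈ Tᶜ, c i • a i = ∑ i ∈ Tᶜ, c i • a' i := by
      rw [← hTT] at hsplit
      exact add_left_cancel hsplit
    have key : (fun i => if i ∈ T then a₀ else a i) = (fun i => if i ∈ T then a₀ else a' i) := by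
      refine hSid.2 _ _ (fun i => ?_) (fun i => ?_) ?_
      · by_cases hi : i ∈ T <;> simp only [if_pos, if_neg, hi, ite_true, ite_false]
        · exact ha₀
        · exact hvalT i hi
      · by_cases hi : i ∈ T <;> simp only [hi, ite_true, ite_false]
        · exact ha₀
        · exact hvalT' i (hTT ▸ hi)
      · have e1 : ∑ i, c i • (fun i => if i ∈ T then a₀ else a i) i
            = (∑ i ∈ T, c i) • a₀ + ∑ i ∈ Tᶜ, c i • a i := by
          rw [sum_smul_split c _ T a₀ (fun i hi => by simp [hi])]
          congr 1
          exact Finset.sum_congr rfl fun i hi => by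
            rw [Finset.mem_compl] at hi; simp [hi]
        have e2 : ∑ i, c i • (fun i => if i ∈ T then a₀ else a' i) i
            = (∑ i ∈ T, c i) • a₀ + ∑ i ∈ Tᶜ, c i • a' i := by
          rw [sum_smul_split c _ T a₀ (fun i hi => by simp [hi])]
          congr 1
          exact Finset.sum_congr rfl fun i hi => by
            rw [Finset.mem_compl] at hi; simp [hi]
        rw [e1, e2, hsum2]
    funext i
    by_cases hi : i ∈ T
    · rw [(hmemT i).mp hi, (hmemT' i).mp (hTT ▸ hi)]
    · have := congrFun key i
      simpa only [if_neg hi] using this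
  · exfalso
    apply hbB
    have hs : (∑ i ∈ T, c i) - (∑ i ∈ T', c i) ≠ 0 := by
      intro hs0
      apply hN
      refine ⟨T \ T', T' \ T, disjoint_sdiff_sdiff, ?_, ?_⟩
      · rintro ⟨h1, h2⟩
        exact hTT (Finset.Subset.antisymm (Finset.sdiff_eq_empty_iff_subset.mp h1)
          (Finset.sdiff_eq_empty_iff_subset.mp h2))
      · have e1 := Finset.sum_inter_add_sum_sdiff T T' c
        have e2 := Finset.sum_inter_add_sum_sdiff T' T c
        rw [Finset.inter_comm] at e2
        have e3 : ∑ i ∈ T, c i = ∑ i ∈ T', c i := sub_eq_zero.mp hs0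
        linear_combination e1 - e2 + e3
    set g : Fin h → ↥A := fun i => if hi : a i ∈ A then (⟨a i, hi⟩ : ↥A) else ⟨a₀, ha₀⟩ with hg
    set g' : Fin h → ↥A := fun i => if hi : a' i ∈ A then (⟨a' i, hi⟩ : ↥A) else ⟨a₀, ha₀⟩ with hg'
    refine ⟨⟨T, T', g, g'⟩, ?_⟩
    show (∑ i ∈ T, c i - ∑ i ∈ T', c i)⁻¹ •
      ((∑ i ∈ T'ᶜ, c i • (g' i : V)) - ∑ i ∈ Tᶜ, c i • (g i : V)) = b
    have eg : ∑ i ∈ Tᶜ, c i • (g i : V) = ∑ i ∈ Tᶜ, c i • a i := by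
      refine Finset.sum_congr rfl fun i hi => ?_
      have := hvalT i (Finset.mem_compl.mp hi)
      simp [hg, this]
    have eg' : ∑ i ∈ T'ᶜ, c i • (g' i : V) = ∑ i ∈ T'ᶜ, c i • a' i := by
      refine Finset.sum_congr rfl fun i hi => ?_
      have := hvalT' i (Finset.mem_compl.mp hi)
      simp [hg', this]
    rw [eg, eg', inv_smul_eq_iff₀ hs]
    rw [sub_smul, sub_eq_sub_iff_add_eq_add, add_comm (∑ i ∈ T'ᶜ, c i • a' i)]
    exact hsplit.symm

lemma exists_infinite_sidon_sub {h : ℕ} {c : Fin h → F} (hN : PropN c) {X : Set V}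
    (hX : X.Infinite) : ∃ A ⊆ X, A.Infinite ∧ IsSidonSet c A := by
  classical
  obtain ⟨x₀, hx₀⟩ := hX.nonempty
  set P : Finset V → Prop := fun A => ↑A ⊆ X ∧ A.Nonempty ∧ IsSidonSet c (↑A : Set V) with hP
  have hstep : ∀ A : Finset V, P A → ∃ B : Finset V, P B ∧ A ⊂ B := by
    rintro A ⟨h1, h2, h3⟩
    obtain ⟨b, hbX, hbA, hbS⟩ := extend_sidon hN A h2 h3 hX
    refine ⟨insert b A, ⟨?_, ⟨b, mem_insert_self _ _⟩, ?_⟩, Finset.ssubset_insert hbA⟩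
    · rw [Finset.coe_insert]; exact Set.insert_subset hbX h1
    · rw [Finset.coe_insert]; exact hbS
  have hbase : P {x₀} := by
    refine ⟨by simpa using hx₀, ⟨x₀, mem_singleton_self _⟩, ⟨x₀, by simp⟩, ?_⟩
    intro a a' ha ha' _
    funext i
    have h1 := ha i
    have h2 := ha' i
    simp only [Finset.coe_singleton, Set.mem_singleton_iff] at h1 h2
    rw [h1, h2]
  choose! f hf1 hf2 using hstep
  set g : ℕ → Finset V := fun n => f^[n] {x₀} with hgdef
  have hgP : ∀ n, P (g n) := by
    intro n
    induction n with
    | zero => exact hbase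
    | succ n ih =>
      have : g (n+1) = f (g n) := Function.iterate_succ_apply' f n {x₀}
      rw [this]
      exact hf1 _ ih
  have hgss : ∀ n, g n ⊂ g (n+1) := by
    intro n
    have : g (n+1) = f (g n) := Function.iterate_succ_apply' f n {x₀}
    rw [this]
    exact hf2 _ (hgP n)
  have hmono : Monotone g := monotone_nat_of_le_succ fun n => (hgss n).subset
  have hcard : ∀ n, n < (g n).card := by
    intro n
    induction n with
    | zero => exact Finset.card_pos.mpr (hgP 0).2.1
    | succ n ih => exact Nat.lt_of_le_of_lt ih (Finset.card_lt_card (hgss n))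
  refine ⟨⋃ n, (g n : Set V), Set.iUnion_subset fun n => (hgP n).1, ?_, ?_⟩
  · intro hf
    have hsub : ∀ n, g n ⊆ hf.toFinset := fun n x hx =>
      hf.mem_toFinset.mpr (Set.mem_iUnion.mpr ⟨n, hx⟩)
    have := Finset.card_le_card (hsub hf.toFinset.card)
    exact absurd this (Nat.not_le.mpr (hcard _))
  · refine ⟨⟨x₀, Set.mem_iUnion.mpr ⟨0, by simp [hgdef]⟩⟩, ?_⟩
    intro a a' ha ha' hsum
    have hex : ∀ i : Fin h, ∃ n, a i ∈ g n ∧ a' i ∈ g n := by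
      intro i
      obtain ⟨n, hn⟩ := Set.mem_iUnion.mp (ha i)
      obtain ⟨m, hm⟩ := Set.mem_iUnion.mp (ha' i)
      exact ⟨max n m, hmono (le_max_left n m) hn, hmono (le_max_right n m) hm⟩
    choose t ht1 ht2 using hex
    exact (hgP (Finset.univ.sup t)).2.2.2 a a'
      (fun i => hmono (Finset.le_sup (mem_univ i)) (ht1 i))
      (fun i => hmono (Finset.le_sup (mem_univ i)) (ht2 i)) hsum

theorem sidon_existence_tfae {h : ℕ} (c : Fin h → F) (hc : ∀ i, c i ≠ 0)
    [Infinite V] (X : Set V) (hX : X.Infinite) :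
    ((∃ A ⊆ X, A.Infinite ∧ IsSidonSet c A) ↔ PropN c) ∧
    ((∃ A ⊆ X, A.Nontrivial ∧ IsSidonSet c A) ↔ PropN c) := by
  constructor
  · constructor
    · rintro ⟨A, _, hInf, hSid⟩
      exact propN_of_nontrivial hInf.nontrivial hSid
    · intro hN
      exact exists_infinite_sidon_sub hN hX
  · constructor
    · rintro ⟨A, _, hnt, hSid⟩
      exact propN_of_nontrivial hnt hSid
    · intro hN
      obtain ⟨A, h1, h2, h3⟩ := exists_infinite_sidon_sub hN hX
      exact ⟨A, h1, h2.nontrivial, h3⟩
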